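/- arXiv:1604.03015 — 2 statements merged into one kernel-verified Lean document; each statement's English description precedes it below -/
import Mathlib

section
/- Let h ≥ 1, ε > 0, and let M₀, …, M_h be finite modules over commutative rings in which 1, …, h are units, with |Mᵢ| > (h+1)/ε for all i. Let W = ⊕ᵢ₌₀ʰ Mᵢ and define f : W → W by f(x₀,…,x_h) = (0, −(1/h)x₁, …, −(i/h)xᵢ, …, −x_h). Then the set L₁ = {j·w + h·f(w) : w ∈ W, 0 ≤ j ≤ h} satisfies |L₁| < ε·|W|. -/
theorem initial_step_level_one_small (h : ℕ) (hh : 0 < h) (ε : ℝ) (hε : 0 < ε)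
    (R : Fin (h + 1) → Type*) [∀ i, CommRing (R i)]
    (M : Fin (h + 1) → Type*) [∀ i, AddCommGroup (M i)] [∀ i, Module (R i) (M i)]
    [∀ i, Fintype (M i)]
    (hcard : ∀ i, ((h : ℝ) + 1) / ε < (Fintype.card (M i) : ℝ))
    (hu : ∀ i, ∀ r : ℕ, 1 ≤ r → r ≤ h → IsUnit ((r : ℕ) : R i))
    (f : (∀ i, M i) → ∀ i, M i)
    (hf : ∀ (w : ∀ i, M i) (i : Fin (h + 1)), h • f w i = -((i : ℕ) • w i)) :
    let L₁ : Set (∀ i, M i) := {z | ∃ (w : ∀ i, M i) (j : ℕ), j ≤ h ∧ z = j • w + h • f w}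
    (Nat.card L₁ : ℝ) < ε * (Fintype.card (∀ i, M i) : ℝ) := by
  intro L₁
  classical
  set S : Fin (h + 1) → Set (∀ i, M i) := fun i => {z | z i = 0} with hS
  -- L₁ is contained in the union of coordinate-vanishing sets
  have hsub : L₁ ⊆ ⋃ i, S i := by
    rintro z ⟨w, j, hj, rfl⟩
    refine Set.mem_iUnion.2 ⟨⟨j, Nat.lt_succ_of_le hj⟩, ?_⟩
    have hfi := hf w ⟨j, Nat.lt_succ_of_le hj⟩
    show (j • w + h • f w) ⟨j, Nat.lt_succ_of_le hj⟩ = 0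
    have : (j • w + h • f w) ⟨j, Nat.lt_succ_of_le hj⟩
        = j • w ⟨j, Nat.lt_succ_of_le hj⟩ + h • f w ⟨j, Nat.lt_succ_of_le hj⟩ := rfl
    rw [this, hfi]
    simp
  -- per-coordinate cardinality bound
  have hcardS : ∀ i, (S i).ncard * Fintype.card (M i) ≤ Fintype.card (∀ k, M k) := by
    intro i
    have hinj : Function.Injective
        (fun p : (S i) × M i => Function.update (p.1 : ∀ k, M k) i p.2) := by
      rintro ⟨⟨z, hz⟩, m⟩ ⟨⟨z', hz'⟩, m'⟩ heq
      simp only [Prod.mk.injEq, Subtype.mk.injEq]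
      have hm : m = m' := by
        have := congrFun heq i
        simpa using this
      refine ⟨funext fun k => ?_, hm⟩
      by_cases hk : k = i
      · subst hk; exact hz.trans hz'.symm
      · have := congrFun heq k
        simpa [Function.update_of_ne hk] using this
    have := Fintype.card_le_of_injective _ hinj
    rw [Fintype.card_prod] at this
    rwa [Set.ncard_eq_toFinset_card', Set.toFinset_card]
  -- union bound
  have key : (⋃ i, S i).ncard ≤ ∑ i : Fin (h + 1), (S i).ncard := by
    have hfin : (⋃ i, S i).toFinset = Finset.univ.biUnion (fun i => (S i).toFinset) := by
      ext z; simp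
    rw [Set.ncard_eq_toFinset_card', hfin]
    simp_rw [Set.ncard_eq_toFinset_card']
    exact Finset.card_biUnion_le
  have hN : (0 : ℝ) < (Fintype.card (∀ k, M k) : ℝ) := by
    exact_mod_cast Fintype.card_pos
  -- real-valued per-coordinate bound
  have hreal : ∀ i : Fin (h + 1),
      ((S i).ncard : ℝ) < ε * (Fintype.card (∀ k, M k) : ℝ) / ((h : ℝ) + 1) := by
    intro i
    have h1 := hcardS i
    have h2 := hcard i
    have hMi : (0 : ℝ) < (Fintype.card (M i) : ℝ) := by exact_mod_cast Fintype.card_pos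
    have h1' : ((S i).ncard : ℝ) * (Fintype.card (M i) : ℝ) ≤ (Fintype.card (∀ k, M k) : ℝ) := by
      exact_mod_cast h1
    have hhp : (0 : ℝ) < (h : ℝ) + 1 := by positivity
    have hlt : ((h : ℝ) + 1) / ε < (Fintype.card (M i) : ℝ) := h2
    have hε' : ((h : ℝ) + 1) < ε * (Fintype.card (M i) : ℝ) := by
      rw [div_lt_iff₀ hε] at hlt; linarith [mul_comm ε (Fintype.card (M i) : ℝ)]
    rw [lt_div_iff₀ hhp]
    nlinarith [(Nat.cast_nonneg (S i).ncard : (0:ℝ) ≤ _), hN]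
  calc (Nat.card L₁ : ℝ) = (L₁.ncard : ℝ) := by rw [Nat.card_coe_set_eq]
    _ ≤ ((⋃ i, S i).ncard : ℝ) := by
        exact_mod_cast Set.ncard_le_ncard hsub (Set.toFinite _)
    _ ≤ ∑ i : Fin (h + 1), ((S i).ncard : ℝ) := by exact_mod_cast key
    _ < ∑ _i : Fin (h + 1), ε * (Fintype.card (∀ k, M k) : ℝ) / ((h : ℝ) + 1) := by
        exact Finset.sum_lt_sum_of_nonempty Finset.univ_nonempty fun i _ => hreal i
    _ = ε * (Fintype.card (∀ k, M k) : ℝ) := by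
        rw [Finset.sum_const, Finset.card_univ, Fintype.card_fin]
        rw [nsmul_eq_mul]; push_cast
        field_simp
end

section
/- Let W and W' be finite abelian groups, let A = A(W⊕W', F) for a function F of the form F(w,w') = (f(w), g(w,w')), and let (γ,δ) be an admissible pair on W⊕W' representing z ∈ h·A. Define γ̂(w) = Σ_{w'∈W'} γ(w,w') and δ̂(w) = Σ_{w'∈W'} δ(w,w'). Then (γ̂, δ̂) is an admissible pair on W representing π(z) ∈ h·A(W,f), where π is the projection onto W, and the level of (γ̂, δ̂) is at most the level of (γ,δ). -/
/-- The `h`-fold sumset of a set `A` in an additive group. -/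
def nfoldSum {W : Type*} [AddCommMonoid W] (h : ℕ) (A : Set W) : Set W :=
  {z | ∃ a : Fin h → W, (∀ i, a i ∈ A) ∧ z = ∑ i, a i}

lemma my_card_sum {ι α : Type*} (s : Finset ι) (m : ι → Multiset α) :
    Multiset.card (∑ i ∈ s, m i) = ∑ i ∈ s, Multiset.card (m i) :=
  map_sum (⟨⟨Multiset.card, Multiset.card_zero⟩, Multiset.card_add⟩ : Multiset α →+ ℕ) m s

lemma my_sum_sum {ι α : Type*} [AddCommMonoid α] (s : Finset ι) (m : ι → Multiset α) :
    (∑ i ∈ s, m i).sum = ∑ i ∈ s, (m i).sum :=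
  map_sum Multiset.sumAddMonoidHom m s

lemma multiset_mem_nfoldSum' {W : Type*} [AddCommMonoid W] {h : ℕ} {A : Set W} (s : Multiset W)
    (hcard : Multiset.card s = h) (hmem : ∀ x ∈ s, x ∈ A) :
    ∃ a : Fin h → W, (∀ i, a i ∈ A) ∧ s.sum = ∑ i, a i := by
  obtain ⟨l, rfl⟩ := s.exists_rep
  have hl : l.length = h := hcard
  subst hl
  refine ⟨l.get, fun i => hmem _ (l.get_mem i), ?_⟩
  simp [← List.sum_ofFn, List.ofFn_get]

lemma smul_sum_mem {ι W : Type*} [AddCommMonoid W] [Fintype ι] (α β : ι → ℕ) (x y : ι → W)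
    (A : Set W) (hx : ∀ i, x i ∈ A) (hy : ∀ i, y i ∈ A) (h : ℕ)
    (hs : ∑ i, (α i + β i) = h) :
    ∃ a : Fin h → W, (∀ i, a i ∈ A) ∧ (∑ i, (α i • x i + β i • y i)) = ∑ i, a i := by
  have := multiset_mem_nfoldSum'
    (A := A) (h := h)
    (s := ∑ i : ι, (Multiset.replicate (α i) (x i) + Multiset.replicate (β i) (y i)))
    (by simp [my_card_sum, hs]) (by
      intro v hv
      rw [Multiset.mem_sum] at hv
      obtain ⟨i, _, hi⟩ := hv
      rcases Multiset.mem_add.1 hi with h' | h' <;>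
        rw [Multiset.eq_of_mem_replicate h'] <;> [exact hx i; exact hy i])
  simpa [my_sum_sum, Multiset.sum_replicate] using this

theorem projected_admissible_pair (W W' : Type*) [AddCommGroup W] [AddCommGroup W']
    [Fintype W] [Fintype W'] (h : ℕ) (hh : 0 < h)
    (f : W → W) (g : W × W' → W') (F : W × W' → W × W')
    (hF : ∀ p : W × W', F p = (f p.1, g p))
    (γ δ : W × W' → ℕ) (hbound : ∀ p, γ p ≤ h ∧ δ p ≤ h)
    (hsum : (∑ p : W × W', (γ p + δ p)) = h)
    (z : W × W')
    (hz : z = ∑ p : W × W', (γ p • (p + F p) + δ p • F p)) :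
    let γhat : W → ℕ := fun w => ∑ w' : W', γ (w, w')
    let δhat : W → ℕ := fun w => ∑ w' : W', δ (w, w')
    let A : Set W := {a | ∃ w, w + f w = a} ∪ {a | ∃ w, f w = a}
    (∀ w, γhat w ≤ h ∧ δhat w ≤ h) ∧
    (∑ w : W, (γhat w + δhat w)) = h ∧
    z.1 = ∑ w : W, (γhat w • (w + f w) + δhat w • f w) ∧
    z.1 ∈ nfoldSum h A ∧
    (Finset.univ.filter fun w : W => 1 ≤ γhat w + δhat w).card ≤
      (Finset.univ.filter fun p : W × W' => 1 ≤ γ p + δ p).card := by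
  intro γhat δhat A
  have hsum' : (∑ w : W, (γhat w + δhat w)) = h := by
    rw [← hsum, Fintype.sum_prod_type]
    simp [γhat, δhat, Finset.sum_add_distrib]
  have hb : ∀ w, γhat w ≤ h ∧ δhat w ≤ h := by
    intro w
    have h1 : γhat w + δhat w ≤ h := hsum' ▸
      Finset.single_le_sum (f := fun w => γhat w + δhat w) (fun _ _ => Nat.zero_le _) (Finset.mem_univ w)
    exact ⟨le_trans (Nat.le_add_right _ _) h1, le_trans (Nat.le_add_left _ _) h1⟩
  have hz1 : z.1 = ∑ w : W, (γhat w • (w + f w) + δhat w • f w) := by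
    rw [hz, Prod.fst_sum]
    rw [Fintype.sum_prod_type]
    refine Finset.sum_congr rfl fun w _ => ?_
    simp only [hF, Prod.fst_add, Prod.smul_fst, Finset.sum_add_distrib, ← Finset.sum_smul]
    rfl
  refine ⟨hb, hsum', hz1, ?_, ?_⟩
  · obtain ⟨a, ha, heq⟩ := smul_sum_mem γhat δhat (fun w => w + f w) f A
      (fun w => Or.inl ⟨w, rfl⟩) (fun w => Or.inr ⟨w, rfl⟩) h hsum'
    exact ⟨a, ha, hz1.trans heq⟩
  · apply Finset.card_le_card_of_surjOn Prod.fst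
    intro w hw
    simp only [Finset.coe_filter, Finset.mem_univ, true_and, Set.mem_setOf_eq] at hw ⊢
    have hne : (∑ w' : W', (γ (w, w') + δ (w, w'))) ≠ 0 := by
      have : (∑ w' : W', (γ (w, w') + δ (w, w'))) = γhat w + δhat w := by
        simp [γhat, δhat, Finset.sum_add_distrib]
      omega
    obtain ⟨w', _, h'⟩ := Finset.exists_ne_zero_of_sum_ne_zero hne
    exact ⟨(w, w'), Nat.one_le_iff_ne_zero.2 h', rfl⟩
end
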